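/- Fix k with 1 ≤ k < n and assume gcd(w_1,…,w_k) = 1. Then the number of tuples t = (t_{k+1},…,t_n) ∈ ∏_{i=k+1}^n ℤ/(d/w_i)ℤ that occur as the last n−k entries of some element of M and satisfy t_i ≠ (d/w_i) − 1 (as a residue mod d/w_i) for every k < i ≤ n, is exactly ∏_{i=k+1}^n (d/w_i − 1). In particular, under the hypothesis gcd(w_1,…,w_k) = 1 every tuple of last n−k entries occurs in M. -/

import Mathlib

/- Statement 13: if gcd(w_1,…,w_k) = 1, every tuple of last n−k entries occurs
in M, and the number of occurring tuples avoiding the entries (d/w_i − 1) is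
exactly ∏_{i=k+1}^n (d/w_i − 1). -/

lemma bezout_aux {ι : Type*} [DecidableEq ι] (s : Finset ι) (w : ι → ℕ) :
    ∃ c : ι → ℤ, ((s.gcd w : ℕ) : ℤ) = ∑ i ∈ s, c i * w i := by
  classical
  induction s using Finset.induction_on with
  | empty => exact ⟨0, by simp⟩
  | @insert a s ha ih =>
    obtain ⟨c, hc⟩ := ih
    set A := Int.gcdA (w a : ℤ) ((s.gcd w : ℕ) : ℤ) with hA
    set B := Int.gcdB (w a : ℤ) ((s.gcd w : ℕ) : ℤ) with hB
    refine ⟨fun i => if i = a then A else c i * B, ?_⟩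
    have hb : ((Nat.gcd (w a) (s.gcd w) : ℕ) : ℤ) = (w a) * A + (s.gcd w) * B := by
      have := Int.gcd_eq_gcd_ab (w a : ℤ) ((s.gcd w : ℕ) : ℤ)
      simpa [hA, hB] using this
    have h2 : ∀ i ∈ s, (if i = a then A else c i * B) * (w i : ℤ) = (c i * w i) * B := by
      intro i hi
      rw [if_neg (by rintro rfl; exact ha hi)]; ring
    have h3 : (if a = a then A else c a * B) * (w a : ℤ) = (w a) * A := by
      rw [if_pos rfl]; ring
    rw [Finset.sum_insert ha, Finset.gcd_insert]
    calc ((Nat.gcd (w a) (s.gcd w) : ℕ) : ℤ) = (w a) * A + (s.gcd w) * B := hb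
    _ = (w a) * A + (∑ i ∈ s, c i * (w i : ℤ)) * B := by rw [← hc]
    _ = _ := by
        rw [Finset.sum_mul, ← Finset.sum_congr rfl h2, ← h3]

theorem stmt_13 {n k : ℕ} (hk : 1 ≤ k) (hkn : k < n)
    (w : Fin n → ℕ) (hw : ∀ i, 0 < w i)
    (d : ℕ) (hd : d = ∑ i, w i) (hdvd : ∀ i, w i ∣ d)
    (hgcdk : Finset.gcd (Finset.univ.filter (fun i : Fin n => (i : ℕ) < k)) w = 1)
    (M : Set (∀ i : Fin n, ZMod (d / w i)))
    (hM : M = {x | d ∣ ∑ i, w i * (x i).val})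
    (π : (∀ i : Fin n, ZMod (d / w i)) →
        ∀ j : {i : Fin n // k ≤ (i : ℕ)}, ZMod (d / w j.val))
    (hπ : π = fun x j => x j.val) :
    (∀ t : ∀ j : {i : Fin n // k ≤ (i : ℕ)}, ZMod (d / w j.val), t ∈ π '' M) ∧
    {t : ∀ j : {i : Fin n // k ≤ (i : ℕ)}, ZMod (d / w j.val) |
        t ∈ π '' M ∧ ∀ j, (t j).val ≠ d / w j.val - 1}.Finite ∧
    {t : ∀ j : {i : Fin n // k ≤ (i : ℕ)}, ZMod (d / w j.val) |
        t ∈ π '' M ∧ ∀ j, (t j).val ≠ d / w j.val - 1}.ncard =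
      ∏ j : {i : Fin n // k ≤ (i : ℕ)}, (d / w j.val - 1) := by
  classical
  have hn : 0 < n := lt_of_le_of_lt (Nat.zero_le k) hkn
  have hd0 : 0 < d := by
    rw [hd]
    exact Finset.sum_pos (fun i _ => hw i) ⟨⟨0, hn⟩, Finset.mem_univ _⟩
  have hq : ∀ i : Fin n, 0 < d / w i :=
    fun i => Nat.div_pos (Nat.le_of_dvd hd0 (hdvd i)) (hw i)
  haveI hNZ : ∀ i : Fin n, NeZero (d / w i) := fun i => ⟨(hq i).ne'⟩
  have hdi : ∀ i : Fin n, (d : ℤ) = (w i : ℤ) * ((d / w i : ℕ) : ℤ) := by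
    intro i
    rw [← Nat.cast_mul, Nat.mul_div_cancel' (hdvd i)]
  -- surjectivity
  have hsurj : ∀ t : ∀ j : {i : Fin n // k ≤ (i : ℕ)}, ZMod (d / w j.val),
      t ∈ π '' M := by
    intro t
    set ks : Finset (Fin n) := Finset.univ.filter (fun i : Fin n => (i : ℕ) < k) with hks
    obtain ⟨c, hc⟩ := bezout_aux ks w
    rw [hgcdk] at hc
    set S : ℤ := ∑ j : {i : Fin n // k ≤ (i : ℕ)}, (w j.val : ℤ) * ((t j).val : ℤ) with hS
    set r : ℤ := -S with hr
    set x : ∀ i : Fin n, ZMod (d / w i) :=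
      fun i => if h : k ≤ (i : ℕ) then t ⟨i, h⟩ else ((r * c i : ℤ) : ZMod (d / w i))
      with hx
    have hcong : ∀ i : Fin n, (d : ℤ) ∣ (w i : ℤ) * ((x i).val : ℤ)
        - (w i : ℤ) * (if h : k ≤ (i : ℕ) then ((t ⟨i, h⟩).val : ℤ) else r * c i) := by
      intro i
      by_cases h : k ≤ (i : ℕ)
      · rw [dif_pos h]
        have : x i = t ⟨i, h⟩ := by rw [hx]; exact dif_pos h
        rw [this, sub_self]
        exact dvd_zero _
      · rw [dif_neg h]
        have hxv : x i = ((r * c i : ℤ) : ZMod (d / w i)) := by rw [hx]; exact dif_neg h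
        have hdvd' : ((d / w i : ℕ) : ℤ) ∣ ((x i).val : ℤ) - r * c i := by
          rw [← ZMod.intCast_zmod_eq_zero_iff_dvd]
          push_cast
          rw [ZMod.natCast_val, ZMod.cast_id, hxv]
          push_cast
          ring
        rw [hdi i, ← mul_sub]
        exact mul_dvd_mul_left _ hdvd'
    have hsum : (d : ℤ) ∣ ∑ i : Fin n, (w i : ℤ) * ((x i).val : ℤ) := by
      have htot : (d : ℤ) ∣ ∑ i : Fin n, ((w i : ℤ) * ((x i).val : ℤ)
          - (w i : ℤ) * (if h : k ≤ (i : ℕ) then ((t ⟨i, h⟩).val : ℤ) else r * c i)) :=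
        Finset.dvd_sum (fun i _ => hcong i)
      have hsplit : ∑ i : Fin n, (w i : ℤ) *
          (if h : k ≤ (i : ℕ) then ((t ⟨i, h⟩).val : ℤ) else r * c i) = 0 := by
        rw [← Finset.sum_filter_add_sum_filter_not Finset.univ (fun i : Fin n => k ≤ (i : ℕ))]
        have h1 : ∑ i ∈ Finset.univ.filter (fun i : Fin n => k ≤ (i : ℕ)),
            (w i : ℤ) * (if h : k ≤ (i : ℕ) then ((t ⟨i, h⟩).val : ℤ) else r * c i) = S := by
          rw [hS, Finset.sum_subtype (p := fun i : Fin n => k ≤ (i : ℕ)) (Finset.univ.filter (fun i : Fin n => k ≤ (i : ℕ)))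
            (fun i => by simp) (fun i : Fin n => (w i : ℤ) *
              (if h : k ≤ (i : ℕ) then ((t ⟨i, h⟩).val : ℤ) else r * c i))]
          refine Finset.sum_congr rfl ?_
          intro j _
          rw [dif_pos j.2]
        have h2 : ∑ i ∈ Finset.univ.filter (fun i : Fin n => ¬ k ≤ (i : ℕ)),
            (w i : ℤ) * (if h : k ≤ (i : ℕ) then ((t ⟨i, h⟩).val : ℤ) else r * c i) = r := by
          have he : Finset.univ.filter (fun i : Fin n => ¬ k ≤ (i : ℕ)) = ks := by
            rw [hks]; ext i; simp
          rw [he]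
          have : ∀ i ∈ ks, (w i : ℤ) *
              (if h : k ≤ (i : ℕ) then ((t ⟨i, h⟩).val : ℤ) else r * c i)
              = r * (c i * (w i : ℤ)) := by
            intro i hi
            have : (i : ℕ) < k := by simpa [hks] using hi
            rw [dif_neg (Nat.not_le.mpr this)]; ring
          rw [Finset.sum_congr rfl this, ← Finset.mul_sum, ← hc]
          simp
        rw [h1, h2, hr]; ring
      rw [Finset.sum_sub_distrib, hsplit, sub_zero] at htot
      exact htot
    have hxM : x ∈ M := by
      rw [hM]
      show d ∣ ∑ i, w i * (x i).val
      have : ((∑ i, w i * (x i).val : ℕ) : ℤ) = ∑ i : Fin n, (w i : ℤ) * ((x i).val : ℤ) := by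
        push_cast; ring
      rw [← Int.natCast_dvd_natCast] at *
      rw [this]
      exact hsum
    refine ⟨x, hxM, ?_⟩
    rw [hπ]
    funext j
    show x j.val = t j
    rw [hx]
    simp only [dif_pos j.2]
  set s : ∀ j : {i : Fin n // k ≤ (i : ℕ)}, Set (ZMod (d / w j.val)) :=
    fun j => {z | z.val ≠ d / w j.val - 1} with hs
  have hsetF : {t : ∀ j : {i : Fin n // k ≤ (i : ℕ)}, ZMod (d / w j.val) |
      t ∈ π '' M ∧ ∀ j, (t j).val ≠ d / w j.val - 1}
      = ↑(Fintype.piFinset fun j => (s j).toFinset) := by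
    ext t
    rw [Set.mem_setOf_eq, Finset.mem_coe, Fintype.mem_piFinset]
    simp only [Set.mem_toFinset, hs, Set.mem_setOf_eq]
    exact ⟨fun h => h.2, fun h => ⟨hsurj t, h⟩⟩
  have hcard : ∀ j : {i : Fin n // k ≤ (i : ℕ)}, (s j).toFinset.card = d / w j.val - 1 := by
    intro j
    set m := d / w j.val with hm'
    have hm : 0 < m := hq j.val
    have hsj : s j = ({((m - 1 : ℕ) : ZMod m)}ᶜ : Set (ZMod m)) := by
      ext z
      simp only [hs, Set.mem_setOf_eq, Set.mem_compl_iff, Set.mem_singleton_iff]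
      constructor
      · intro h hz
        apply h
        rw [hz, ZMod.val_cast_of_lt (Nat.sub_lt hm one_pos)]
      · intro h hz
        apply h
        have h2 : ((z.val : ℕ) : ZMod m) = ((m - 1 : ℕ) : ZMod m) := by rw [hz]
        rwa [ZMod.natCast_val, ZMod.cast_id] at h2
    rw [Set.toFinset_congr hsj, Set.toFinset_compl, Set.toFinset_singleton, Finset.card_compl,
      Finset.card_singleton, ZMod.card]
  refine ⟨hsurj, ?_, ?_⟩
  · rw [hsetF]
    exact Set.toFinite _
  · rw [hsetF, Set.ncard_coe_finset, Fintype.card_piFinset]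
    exact Finset.prod_congr rfl (fun j _ => hcard j)
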